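/- The map ε is a left counit for Δ on FN(X): (ε ⊗ id)Δ(w) = 1_k ⊗ w for all w ∈ FN(X). -/

import Mathlib

open scoped TensorProduct

universe u v w

/-- Letters of bracketed words in `X`: either a variable from `X` or a bracket
`⌊u⌋` enclosing a (bracketed) word `u`. Lists of letters are exactly the bracketed
words, i.e. the elements of the free operated monoid `𝔐(X)`. -/
inductive Lt (X : Type u) : Type u
  | var : X → Lt X
  | brk : List (Lt X) → Lt X

namespace Nij

noncomputable section

variable {X : Type u}

/-- Two letters may be adjacent in an "alternating" word iff they are not both brackets. -/
def altP : Lt X → Lt X → Prop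
  | Lt.brk _, Lt.brk _ => False
  | _, _ => True

/-- A letter is good (i.e. lies in `X ⊔ ⌊𝔛_∞⌋`) if each bracket encloses a word whose
letters are good and in which no two consecutive letters are brackets. -/
inductive GoodL : Lt X → Prop
  | var (x : X) : GoodL (Lt.var x)
  | brk (u : List (Lt X)) (h1 : ∀ a ∈ u, GoodL a) (h2 : List.Chain' altP u) :
      GoodL (Lt.brk u)

/-- The words in `𝔛_∞`: all letters good and no two consecutive brackets. -/
def GoodW (w : List (Lt X)) : Prop := (∀ a ∈ w, GoodL a) ∧ List.Chain' altP w

/-- The set `𝔛_∞` of basis words of the free Nijenhuis algebra. -/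
def NW (X : Type u) : Type u := {w : List (Lt X) // GoodW w}

/-- The free Nijenhuis algebra `FN(X) = k𝔛_∞` as a `k`-module. -/
abbrev FN (k : Type v) [CommRing k] (X : Type u) : Type (max u v) := NW X →₀ k

/-- The empty word `1 ∈ 𝔛_∞`. -/
def one : NW X := ⟨[], by constructor <;> first | simp | exact List.isChain_nil⟩

/-- A single good letter forms a good word. -/
lemma goodW_singleton {a : Lt X} (h : GoodL a) : GoodW [a] := by
  constructor
  · intro b hb
    rw [List.mem_singleton] at hb
    exact hb ▸ h
  · exact List.isChain_singleton _

/-- The single-letter word `x ∈ 𝔛_∞` for `x ∈ X`. -/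
def varW (x : X) : NW X := ⟨[Lt.var x], goodW_singleton (GoodL.var x)⟩

/-- The word `⌊w⌋ ∈ 𝔛_∞` for `w ∈ 𝔛_∞`. -/
def NopW (w : NW X) : NW X := ⟨[Lt.brk w.1], goodW_singleton (GoodL.brk _ w.2.1 w.2.2)⟩

/-- The single-letter word `[a] ∈ 𝔛_∞` for a good letter `a ∈ X ⊔ ⌊𝔛_∞⌋`. -/
def letterW (a : Lt X) (h : GoodL a) : NW X := ⟨[a], goodW_singleton h⟩

variable (k : Type v) [CommRing k]

/-- The basis element of `FN(X)` corresponding to `w ∈ 𝔛_∞`. -/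
def bw (w : NW X) : FN k X := Finsupp.single w 1

/-- The Nijenhuis operator `N_X` on `FN(X)`, the linear extension of `w ↦ ⌊w⌋`. -/
def Nop : FN k X →ₗ[k] FN k X := Finsupp.lmapDomain k k NopW

/-- The natural linear embedding `k𝔛_∞ → k𝔐(X)` into the monoid algebra of the free
monoid of bracketed words, used to express concatenation of words linearly. -/
def iota : FN k X →ₗ[k] MonoidAlgebra k (FreeMonoid (Lt X)) :=
  (MonoidAlgebra.coeffLinearEquiv k).symm.toLinearMap ∘ₗ
    Finsupp.lmapDomain k k (fun w : NW X => FreeMonoid.ofList w.1)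

/-- The left counit `ε : FN(X) → k`, `ε(1) = 1` and `ε(w) = 0` for `1 ≠ w ∈ 𝔛_∞`. -/
def eps : FN k X →ₗ[k] k := Finsupp.lapply one

/-- A specification of the product `⋄` on `FN(X) = k𝔛_∞`: a `k`-bilinear map satisfying
the defining recursive equations of the paper. These equations determine `⋄` uniquely.

* `concat`: if the last letter of `u` and the first letter of `v` are not both brackets
  (in particular if `u` or `v` is empty), then `u ⋄ v` is the concatenation `uv`.
* `brkbrk`: `⌊ū⌋ ⋄ ⌊v̄⌋ = ⌊ū ⋄ ⌊v̄⌋⌋ + ⌊⌊ū⌋ ⋄ v̄⌋ − ⌊⌊ū ⋄ v̄⌋⌋`.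
* `split`: if `u = u₀a` and `v = bv₀` then `u ⋄ v = u₀ (a ⋄ b) v₀`, the outer products
  being concatenation (expressed in the monoid algebra `k𝔐(X)` via `iota`). -/
structure DiamondSpec (k : Type v) (X : Type u) [CommRing k] where
  mul : FN k X →ₗ[k] FN k X →ₗ[k] FN k X
  concat : ∀ u v : NW X,
    (¬ ∃ (a b : List (Lt X)), u.1.getLast? = some (Lt.brk a) ∧ v.1.head? = some (Lt.brk b)) →
    iota k (mul (bw k u) (bw k v)) = iota k (bw k u) * iota k (bw k v)
  brkbrk : ∀ u v : NW X,
    mul (Nop k (bw k u)) (Nop k (bw k v)) =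
      Nop k (mul (bw k u) (Nop k (bw k v))) + Nop k (mul (Nop k (bw k u)) (bw k v))
        - Nop k (Nop k (mul (bw k u) (bw k v)))
  split : ∀ (u v : NW X) (u₀ v₀ : List (Lt X)) (a b : Lt X)
      (ha : GoodW [a]) (hb : GoodW [b]),
      u.1 = u₀ ++ [a] → v.1 = b :: v₀ →
      iota k (mul (bw k u) (bw k v)) =
        MonoidAlgebra.of k (FreeMonoid (Lt X)) (FreeMonoid.ofList u₀) *
          iota k (mul (bw k ⟨[a], ha⟩) (bw k ⟨[b], hb⟩)) *
          MonoidAlgebra.of k (FreeMonoid (Lt X)) (FreeMonoid.ofList v₀)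

/-- The componentwise product on `FN(X) ⊗ FN(X)` induced by `⋄`:
`(a ⊗ b) ⋄ (c ⊗ d) = (a ⋄ c) ⊗ (b ⋄ d)`. -/
def mul2 (d : DiamondSpec k X) :
    (FN k X ⊗[k] FN k X) →ₗ[k] (FN k X ⊗[k] FN k X) →ₗ[k] (FN k X ⊗[k] FN k X) :=
  TensorProduct.lift <| LinearMap.mk₂ k
    (fun a b => TensorProduct.map (d.mul a) (d.mul b))
    (fun a a' b => by simp only [map_add, TensorProduct.map_add_left])
    (fun c a b => by simp only [map_smul, TensorProduct.map_smul_left])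
    (fun a b b' => by simp only [map_add, TensorProduct.map_add_right])
    (fun c a b => by simp only [map_smul, TensorProduct.map_smul_right])

/-- A specification of the coproduct `Δ` on `FN(X)`: a `k`-linear map satisfying the
defining equations of the paper. These equations determine `Δ` uniquely.

* `delta_one`: `Δ(1) = 1 ⊗ 1`;
* `delta_var`: `Δ(x) = 1 ⊗ x` for `x ∈ X`;
* `delta_brk`: `Δ(⌊w⌋) = (id ⊗ N_X) Δ(w)` (the 1-cocycle condition on basis elements);
* `delta_split`: `Δ(w₁ ⋄ ⋯ ⋄ w_m) = Δ(w₁) ⋄ (Δ(w₂) ⋄ ⋯ ⋄ Δ(w_m))` for the alternating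
  `⋄`-factorization of a word into its letters, stated in its binary recursive form. -/
structure DeltaSpec (k : Type v) (X : Type u) [CommRing k] extends DiamondSpec k X where
  delta : FN k X →ₗ[k] FN k X ⊗[k] FN k X
  delta_one : delta (bw k one) = bw k one ⊗ₜ[k] bw k one
  delta_var : ∀ x : X, delta (bw k (varW x)) = bw k one ⊗ₜ[k] bw k (varW x)
  delta_brk : ∀ w : NW X,
    delta (Nop k (bw k w)) = LinearMap.lTensor (FN k X) (Nop k) (delta (bw k w))
  delta_split : ∀ (w : NW X) (a : Lt X) (rest : List (Lt X))
      (ha : GoodW [a]) (hrest : GoodW rest), w.1 = a :: rest → rest ≠ [] →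
      delta (bw k w) =
        mul2 k toDiamondSpec (delta (bw k ⟨[a], ha⟩)) (delta (bw k ⟨rest, hrest⟩))

/-- The product `w₁ ⋄ w₂ ⋄ ⋯ ⋄ w_m ∈ FN(X)` of a sequence of letters from `X ⊔ ⌊𝔛_∞⌋`
(the empty product being `1`). -/
def prodOf (d : DiamondSpec k X) : (l : List (Lt X)) → (∀ a ∈ l, GoodL a) → FN k X
  | [], _ => bw k one
  | a :: rest, h =>
      d.mul (bw k (letterW a (h a (List.mem_cons_self (a := a) (l := rest)))))
        (prodOf d rest (fun b hb => h b (List.mem_cons_of_mem a hb)))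

mutual
  /-- The degree of a letter: `deg(x) = 1` for `x ∈ X`, `deg(⌊u⌋) = 1 + deg(u)`. -/
  def degL : Lt X → ℕ
    | Lt.var _ => 1
    | Lt.brk u => 1 + degList u
  /-- The degree of a bracketed word: the total number of occurrences of elements of `X`
  and of brackets `⌊·⌋` in it. -/
  def degList : List (Lt X) → ℕ
    | [] => 0
    | a :: rest => degL a + degList rest
end

/-- The homogeneous component `FN^(n)`: the `k`-span of the basis words of degree `n`. -/
def FNdeg (n : ℕ) : Submodule k (FN k X) :=
  Submodule.span k {f | ∃ w : NW X, degList w.1 = n ∧ f = bw k w}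

/-- The image `A ⊗ B` of the tensor product of two submodules inside `M ⊗ M`. -/
def tsub {M : Type w} [AddCommGroup M] [Module k M] (A B : Submodule k M) :
    Submodule k (M ⊗[k] M) :=
  Submodule.span k {x | ∃ a ∈ A, ∃ b ∈ B, x = a ⊗ₜ[k] b}

/-! ### Auxiliary lemmas for Statement 9 -/

open scoped Classical

lemma eps_bw (w : NW X) : eps k (bw k w) = if w = one then 1 else 0 := by
  classical
  simp [eps, bw, Finsupp.lapply_apply, Finsupp.single_apply]

lemma eps_bw_one : eps k (bw k (one : NW X)) = 1 := by
  rw [eps_bw]; simp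

lemma Nop_bw (w : NW X) : Nop k (bw k w) = bw k (NopW w) := by
  simp [Nop, bw, Finsupp.lmapDomain_apply, Finsupp.mapDomain_single]

lemma eps_Nop (f : FN k X) : eps k (Nop k f) = 0 := by
  simp only [eps, Nop, Finsupp.lapply_apply, Finsupp.lmapDomain_apply]
  refine Finsupp.mapDomain_notin_range _ _ ?_
  rintro ⟨w, hw⟩
  have : ([Lt.brk w.1] : List (Lt X)) = [] := congrArg Subtype.val hw
  simp at this

lemma iota_bw (w : NW X) : iota k (bw k w) =
    MonoidAlgebra.single (FreeMonoid.ofList w.1) 1 := by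
  exact congrArg MonoidAlgebra.ofCoeff Finsupp.mapDomain_single

lemma iota_injective : Function.Injective (iota k (X := X)) := by
  intro f g h
  simp only [iota, LinearMap.coe_comp, Function.comp_apply, LinearEquiv.coe_coe, EmbeddingLike.apply_eq_iff_eq, Finsupp.lmapDomain_apply] at h
  refine Finsupp.mapDomain_injective ?_ h
  intro a b hab
  exact Subtype.ext (congrArg FreeMonoid.toList hab)

/-- The monoid hom `FreeMonoid (Lt X) →* k` sending `1 ↦ 1` and all other words to `0`. -/
def phi : FreeMonoid (Lt X) →* k where
  toFun m := if m = 1 then 1 else 0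
  map_one' := if_pos rfl
  map_mul' m n := by
    classical
    have key : m * n = 1 ↔ m = 1 ∧ n = 1 := by
      constructor
      · intro h
        have h' : FreeMonoid.toList m ++ FreeMonoid.toList n = [] :=
          congrArg FreeMonoid.toList h
        rcases List.append_eq_nil_iff.mp h' with ⟨h1, h2⟩
        exact ⟨FreeMonoid.toList.injective (h1.trans rfl),
          FreeMonoid.toList.injective (h2.trans rfl)⟩
      · rintro ⟨rfl, rfl⟩; simp
    by_cases hm : m = 1 <;> by_cases hn : n = 1 <;> simp [hm, hn, key]

/-- The "coefficient at the empty word" algebra hom of the monoid algebra. -/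
def epsM : MonoidAlgebra k (FreeMonoid (Lt X)) →ₐ[k] k :=
  MonoidAlgebra.lift k k (FreeMonoid (Lt X)) (phi k)

lemma eps_eq_epsM_iota (f : FN k X) : eps k f = epsM k (iota k f) := by
  classical
  induction f using Finsupp.induction_linear with
  | zero => simp
  | add f g hf hg => simp [map_add, hf, hg]
  | single a b =>
    have hb : (Finsupp.single a b : FN k X) = b • bw k a := by
      simp [bw, Finsupp.smul_single]
    rw [hb, map_smul, map_smul, map_smul, eps_bw, iota_bw, epsM,
      MonoidAlgebra.lift_single]
    simp only [phi, MonoidHom.coe_mk, OneHom.coe_mk, smul_eq_mul]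
    by_cases h : a = one
    · subst h
      simp [one]
      exact (congrArg (b * ·) (if_pos rfl)).trans (mul_one b)
    · have hc : FreeMonoid.ofList (a.1) ≠ 1 := fun hc =>
        h (Subtype.ext (congrArg FreeMonoid.toList hc))
      rw [if_neg h, if_neg hc]
      simp

lemma epsM_single (m : FreeMonoid (Lt X)) (c : k) :
    epsM k (MonoidAlgebra.single m c) = c * (if m = 1 then 1 else 0) := by
  rw [epsM, MonoidAlgebra.lift_single]
  simp [phi, smul_eq_mul]

lemma eps_mul_bw (d : DiamondSpec k X) (u v : NW X) :
    eps k (d.mul (bw k u) (bw k v)) = eps k (bw k u) * eps k (bw k v) := by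
  classical
  by_cases hc : ∃ a b : List (Lt X),
      u.1.getLast? = some (Lt.brk a) ∧ v.1.head? = some (Lt.brk b)
  · obtain ⟨a, b, hua, hvb⟩ := hc
    have hune : u.1 ≠ [] := by intro h; rw [h] at hua; simp at hua
    have hvne : v.1 ≠ [] := by intro h; rw [h] at hvb; simp at hvb
    -- the ends are brackets
    have hgetlast : u.1.getLast hune = Lt.brk a := by
      have := List.getLast?_eq_getLast hune
      rw [this] at hua; exact Option.some_injective _ hua
    have hhead : v.1.head hvne = Lt.brk b := by
      have := List.head?_eq_head hvne
      rw [this] at hvb; exact Option.some_injective _ hvb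
    have hga : GoodL (Lt.brk a) := by
      rw [← hgetlast]; exact u.2.1 _ (List.getLast_mem hune)
    have hgb : GoodL (Lt.brk b) := by
      rw [← hhead]; exact v.2.1 _ (List.head_mem hvne)
    have hu : u.1 = u.1.dropLast ++ [Lt.brk a] := by
      rw [← hgetlast]; exact (List.dropLast_append_getLast hune).symm
    have hv : v.1 = Lt.brk b :: v.1.tail := by
      rw [← hhead]; exact (List.cons_head_tail hvne).symm
    have hga' : GoodW [Lt.brk a] := goodW_singleton hga
    have hgb' : GoodW [Lt.brk b] := goodW_singleton hgb
    have hsplit := d.split u v u.1.dropLast v.1.tail (Lt.brk a) (Lt.brk b) hga' hgb' hu hv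
    -- the middle product has zero coefficient at 1
    have haw : GoodW a := by cases hga with | brk _ h1 h2 => exact ⟨h1, h2⟩
    have hbw : GoodW b := by cases hgb with | brk _ h1 h2 => exact ⟨h1, h2⟩
    have hA : bw k (⟨[Lt.brk a], hga'⟩ : NW X) = Nop k (bw k ⟨a, haw⟩) := by
      exact (Nop_bw k ⟨a, haw⟩).symm
    have hB : bw k (⟨[Lt.brk b], hgb'⟩ : NW X) = Nop k (bw k ⟨b, hbw⟩) := by
      exact (Nop_bw k ⟨b, hbw⟩).symm
    have hmid : eps k (d.mul (bw k ⟨[Lt.brk a], hga'⟩) (bw k ⟨[Lt.brk b], hgb'⟩)) = 0 := by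
      rw [hA, hB, d.brkbrk ⟨a, haw⟩ ⟨b, hbw⟩, map_sub, map_add, eps_Nop, eps_Nop, eps_Nop]
      ring
    rw [eps_eq_epsM_iota, hsplit, map_mul, map_mul]
    have : epsM k (iota k (d.mul (bw k ⟨[Lt.brk a], hga'⟩) (bw k ⟨[Lt.brk b], hgb'⟩))) = 0 := by
      rw [← eps_eq_epsM_iota]; exact hmid
    rw [this]
    have hu1 : eps k (bw k u) = 0 := by
      rw [eps_bw, if_neg]
      intro h; exact hune (congrArg Subtype.val h)
    rw [hu1, mul_zero, zero_mul, zero_mul]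
  · rw [eps_eq_epsM_iota, d.concat u v hc, map_mul, ← eps_eq_epsM_iota, ← eps_eq_epsM_iota]

lemma eps_mul (d : DiamondSpec k X) (f g : FN k X) :
    eps k (d.mul f g) = eps k f * eps k g := by
  induction f using Finsupp.induction_linear with
  | zero => simp
  | add f1 f2 h1 h2 => simp [map_add, LinearMap.add_apply, h1, h2, add_mul]
  | single a c =>
    induction g using Finsupp.induction_linear with
    | zero => simp
    | add g1 g2 h1 h2 => simp [map_add, h1, h2, mul_add]
    | single a' c' =>
      have hb : (Finsupp.single a c : FN k X) = c • bw k a := by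
        simp [bw, Finsupp.smul_single]
      have hb' : (Finsupp.single a' c' : FN k X) = c' • bw k a' := by
        simp [bw, Finsupp.smul_single]
      rw [hb, hb']
      simp only [map_smul, LinearMap.smul_apply, smul_eq_mul, eps_mul_bw k d]
      ring

/-- The map `a ⊗ b ↦ ε(a) • b`, i.e. `(ε ⊗ id)` followed by `k ⊗ M ≃ M`. -/
def Emap : (FN k X ⊗[k] FN k X) →ₗ[k] FN k X :=
  TensorProduct.lift ((LinearMap.lsmul k (FN k X)).comp (eps k))

lemma Emap_tmul (a b : FN k X) : Emap k (a ⊗ₜ[k] b) = eps k a • b := by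
  simp [Emap, TensorProduct.lift.tmul]

lemma Emap_mul2 (d : DiamondSpec k X) (x y : FN k X ⊗[k] FN k X) :
    Emap k (mul2 k d x y) = d.mul (Emap k x) (Emap k y) := by
  induction x using TensorProduct.induction_on with
  | zero => simp
  | tmul a b =>
    induction y using TensorProduct.induction_on with
    | zero => simp
    | tmul c e =>
      simp only [mul2, TensorProduct.lift.tmul, LinearMap.mk₂_apply,
        TensorProduct.map_tmul, Emap_tmul, eps_mul k d, map_smul,
        LinearMap.smul_apply, smul_smul]
      ring_nf
    | add y1 y2 h1 h2 => simp only [map_add, h1, h2]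
  | add x1 x2 h1 h2 =>
    simp only [map_add, LinearMap.add_apply, h1, h2]

lemma Emap_lTensor (g : FN k X →ₗ[k] FN k X) (x : FN k X ⊗[k] FN k X) :
    Emap k (LinearMap.lTensor (FN k X) g x) = g (Emap k x) := by
  induction x using TensorProduct.induction_on with
  | zero => simp
  | tmul a b => simp [LinearMap.lTensor_tmul, Emap_tmul, map_smul]
  | add x1 x2 h1 h2 => simp [map_add, h1, h2]

lemma degL_pos (a : Lt X) : 0 < degL a := by
  cases a with
  | var x => simp [degL]
  | brk u => simp only [degL]; omega

lemma degList_pos {l : List (Lt X)} (h : l ≠ []) : 0 < degList l := by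
  cases l with
  | nil => exact absurd rfl h
  | cons a t =>
    have := degL_pos a
    simp only [degList]
    omega

lemma counit_bw (ds : DeltaSpec k X) :
    ∀ (n : ℕ) (w : NW X), degList w.1 ≤ n → Emap k (ds.delta (bw k w)) = bw k w := by
  intro n
  induction n with
  | zero =>
    rintro ⟨l, hl⟩ hw
    have hw' : degList l ≤ 0 := hw
    have hnil : l = [] := by
      by_contra h
      have := degList_pos (l := l) h
      omega
    subst hnil
    have hone : (⟨[], hl⟩ : NW X) = one := Subtype.ext rfl
    rw [hone, ds.delta_one, Emap_tmul, eps_bw_one, one_smul]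
  | succ n ih =>
    rintro ⟨l, hl⟩ hw
    match l, hl, hw with
    | [], hl, hw =>
      have hone : (⟨[], hl⟩ : NW X) = one := Subtype.ext rfl
      rw [hone, ds.delta_one, Emap_tmul, eps_bw_one, one_smul]
    | [Lt.var x], hl, hw =>
      have hvx : (⟨[Lt.var x], hl⟩ : NW X) = varW x := Subtype.ext rfl
      rw [hvx, ds.delta_var, Emap_tmul, eps_bw_one, one_smul]
    | [Lt.brk u], hl, hw =>
      have hgl : GoodL (Lt.brk u) := hl.1 _ (List.mem_singleton.mpr rfl)
      have hgu : GoodW u := by cases hgl with | brk _ h1 h2 => exact ⟨h1, h2⟩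
      have hN : (⟨[Lt.brk u], hl⟩ : NW X) = NopW ⟨u, hgu⟩ := Subtype.ext rfl
      have hdeg : degList u ≤ n := by
        simp only [degList, degL] at hw
        omega
      rw [hN, ← Nop_bw k ⟨u, hgu⟩, ds.delta_brk ⟨u, hgu⟩, Emap_lTensor, ih ⟨u, hgu⟩ hdeg, Nop_bw k ⟨u, hgu⟩]
    | a :: b :: t, hl, hw =>
      have ha : GoodW [a] := goodW_singleton (hl.1 a List.mem_cons_self)
      have hchain := List.isChain_cons_cons.mp hl.2
      have hrest : GoodW (b :: t) :=
        ⟨fun x hx => hl.1 x (List.mem_cons_of_mem a hx), hchain.2⟩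
      rw [ds.delta_split ⟨a :: b :: t, hl⟩ a (b :: t) ha hrest rfl (by simp)]
      have hda : degList [a] ≤ n := by
        have hb := degL_pos b
        have hc := degList_pos (l := b :: t) (by simp)
        simp only [degList] at hw ⊢
        omega
      have hdr : degList (b :: t) ≤ n := by
        have hpa := degL_pos a
        simp only [degList] at hw ⊢
        omega
      rw [Emap_mul2 k ds.toDiamondSpec, ih ⟨[a], ha⟩ hda, ih ⟨b :: t, hrest⟩ hdr]
      -- d.mul (bw [a]) (bw (b::t)) = bw (a::b::t) via concatenation
      apply iota_injective k
      have hcond : ¬ ∃ a' b' : List (Lt X),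
          ([a] : List (Lt X)).getLast? = some (Lt.brk a') ∧
          (b :: t).head? = some (Lt.brk b') := by
        rintro ⟨a', b', h1, h2⟩
        simp only [List.getLast?_singleton, Option.some.injEq] at h1
        simp only [List.head?_cons, Option.some.injEq] at h2
        have halt : altP a b := hchain.1
        rw [h1, h2] at halt
        exact halt
      rw [ds.concat ⟨[a], ha⟩ ⟨b :: t, hrest⟩ hcond, iota_bw k ⟨[a], ha⟩, iota_bw k ⟨b :: t, hrest⟩, iota_bw k ⟨a :: b :: t, hl⟩,
        MonoidAlgebra.single_mul_single, one_mul]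
      rfl

/-- `ε` is a left counit for `Δ` on `FN(X)`:
`(ε ⊗ id)Δ(w) = 1_k ⊗ w` for all `w ∈ FN(X)`. -/
theorem stmt9_left_counit (k : Type v) [CommRing k] {X : Type u}
    (ds : DeltaSpec k X) (w : FN k X) :
    LinearMap.rTensor (FN k X) (eps k) (ds.delta w) = (1 : k) ⊗ₜ[k] w := by
  have hE : ∀ y : FN k X ⊗[k] FN k X,
      LinearMap.rTensor (FN k X) (eps k) y = (1 : k) ⊗ₜ[k] Emap k y := by
    intro y
    induction y using TensorProduct.induction_on with
    | zero => simp
    | tmul a b =>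
      rw [LinearMap.rTensor_tmul, Emap_tmul, TensorProduct.tmul_smul,
        TensorProduct.smul_tmul', smul_eq_mul, mul_one]
    | add y1 y2 h1 h2 => simp [map_add, h1, h2, TensorProduct.tmul_add]
  induction w using Finsupp.induction_linear with
  | zero => simp
  | add f g hf hg => rw [map_add, map_add, hf, hg, TensorProduct.tmul_add]
  | single a c =>
    have hb : (Finsupp.single a c : FN k X) = c • bw k a := by
      simp [bw, Finsupp.smul_single]
    rw [hb, map_smul, map_smul, hE, counit_bw k ds (degList a.1) a le_rfl,
      ← TensorProduct.tmul_smul]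

end

end Nij
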